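/- (Intertwining Λ Q = Q* Λ.) For all i, k ≥ 0, Σ_{j=0}^∞ Λ_{i,j} q_{j,k} = Σ_{j=0}^∞ q*_{i,j} Λ_{j,k}, where both sums have only finitely many nonzero terms; that is, the link matrix Λ intertwines the birth–death generator Q with the dual generator Q*. -/

import Mathlib

/-- `μ_0 = 1`, `μ_i = (b_0 ⋯ b_{i-1})/(a_1 ⋯ a_i)` for `i ≥ 1`. -/
noncomputable def bdMu (a b : ℕ → ℝ) (i : ℕ) : ℝ :=
  (∏ k ∈ Finset.range i, b k) / (∏ k ∈ Finset.range i, a (k + 1))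

/-- The stationary weights `π_i = μ_i / μ`, where `μ = Σ_j μ_j`. -/
noncomputable def bdPi (a b : ℕ → ℝ) (i : ℕ) : ℝ :=
  bdMu a b i / ∑' j : ℕ, bdMu a b j

/-- `H_i = Σ_{j=0}^i π_j`. -/
noncomputable def bdH (a b : ℕ → ℝ) (i : ℕ) : ℝ :=
  ∑ j ∈ Finset.range (i + 1), bdPi a b j

/-- Dual death rates `a*_i = (H_{i−1}/H_i)·b_i` (used for `i ≥ 1`). -/
noncomputable def bdAStar (a b : ℕ → ℝ) (i : ℕ) : ℝ :=
  (bdH a b (i - 1) / bdH a b i) * b i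

/-- Dual birth rates `b*_i = (H_{i+1}/H_i)·a_{i+1}`. -/
noncomputable def bdBStar (a b : ℕ → ℝ) (i : ℕ) : ℝ :=
  (bdH a b (i + 1) / bdH a b i) * a (i + 1)

/-- Dual masses `μ*_0 = 1`, `μ*_i = (b*_0 ⋯ b*_{i−1})/(a*_1 ⋯ a*_i)`. -/
noncomputable def bdMuStar (a b : ℕ → ℝ) (i : ℕ) : ℝ :=
  bdMu (bdAStar a b) (bdBStar a b) i

/-- The entries `q_{i,j}` of the birth–death generator with death rates `a` and
birth rates `b`. -/
noncomputable def bdQEntry (a b : ℕ → ℝ) (i j : ℕ) : ℝ :=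
  if j = i + 1 then b i
  else if i = j + 1 then a i
  else if i = j then (if i = 0 then -(b 0) else -(a i + b i))
  else 0

/-- The link matrix `Λ_{i,j} = π_j/H_i` for `j ≤ i`, and `0` otherwise. -/
noncomputable def bdLink (a b : ℕ → ℝ) (i j : ℕ) : ℝ :=
  if j ≤ i then bdPi a b j / bdH a b i else 0

lemma tsum_three (f : ℕ → ℝ) (m : ℕ)
    (h : ∀ j, f j ≠ 0 → j = m ∨ j = m + 1 ∨ j = m + 2) :
    ∑' j, f j = f m + f (m + 1) + f (m + 2) := by
  have hs : ∑' j, f j = ∑ j ∈ ({m, m + 1, m + 2} : Finset ℕ), f j := by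
    refine tsum_eq_sum ?_
    intro j hj
    by_contra hf
    rcases h j hf with h1 | h1 | h1 <;> simp [h1] at hj
  rw [hs, Finset.sum_insert (by simp), Finset.sum_insert (by simp),
    Finset.sum_singleton]
  ring

section
variable (a b : ℕ → ℝ)

lemma bdQEntry_birth {i j : ℕ} (h : j = i + 1) : bdQEntry a b i j = b i := by
  simp [bdQEntry, h]

lemma bdQEntry_death {i j : ℕ} (h : i = j + 1) : bdQEntry a b i j = a i := by
  simp [bdQEntry, h]; omega

lemma bdQEntry_diag0 : bdQEntry a b 0 0 = -(b 0) := by simp [bdQEntry]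

lemma bdQEntry_diag {i : ℕ} (h : 1 ≤ i) : bdQEntry a b i i = -(a i + b i) := by
  simp [bdQEntry]; omega

lemma bdQEntry_zero {i j : ℕ} (h1 : j ≠ i + 1) (h2 : i ≠ j + 1) (h3 : i ≠ j) :
    bdQEntry a b i j = 0 := by
  simp [bdQEntry, h1, h2, h3]

lemma bdQEntry_supp {i j : ℕ} (h : bdQEntry a b i j ≠ 0) :
    j = i + 1 ∨ i = j + 1 ∨ i = j := by
  by_contra hc
  push_neg at hc
  exact h (bdQEntry_zero a b hc.1 hc.2.1 hc.2.2)

lemma bdLink_le {i j : ℕ} (h : j ≤ i) : bdLink a b i j = bdPi a b j / bdH a b i := by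
  simp [bdLink, h]

lemma bdLink_zero {i j : ℕ} (h : i < j) : bdLink a b i j = 0 := by
  simp [bdLink]; omega

end

section
variable {a b : ℕ → ℝ} (ha : ∀ i, 1 ≤ i → 0 < a i) (hb : ∀ i, 0 < b i)
  (hmu : Summable (bdMu a b))
include ha hb

lemma bdMu_pos (i : ℕ) : 0 < bdMu a b i :=
  div_pos (Finset.prod_pos fun k _ => hb k)
    (Finset.prod_pos fun k _ => ha (k + 1) (by omega))

include hmu

lemma bdPi_pos (i : ℕ) : 0 < bdPi a b i :=
  div_pos (bdMu_pos ha hb i)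
    (Summable.tsum_pos hmu (fun j => (bdMu_pos ha hb j).le) 0 (bdMu_pos ha hb 0))

lemma bdH_pos (i : ℕ) : 0 < bdH a b i :=
  Finset.sum_pos (fun j _ => bdPi_pos ha hb hmu j) (by simp)

lemma bd_db (j : ℕ) : bdPi a b j * b j = bdPi a b (j + 1) * a (j + 1) := by
  have hmu' : bdMu a b (j + 1) = bdMu a b j * b j / a (j + 1) := by
    unfold bdMu
    rw [Finset.prod_range_succ, Finset.prod_range_succ, mul_div_mul_comm,
      mul_div_assoc]
  have haj : a (j + 1) ≠ 0 := (ha (j + 1) (by omega)).ne'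
  unfold bdPi
  rw [hmu', div_right_comm, div_mul_cancel₀ _ haj, div_mul_eq_mul_div]

end

lemma bdH_succ (a b : ℕ → ℝ) (n : ℕ) :
    bdH a b (n + 1) = bdH a b n + bdPi a b (n + 1) := by
  unfold bdH
  rw [Finset.sum_range_succ]


set_option maxHeartbeats 1000000 in
/-- intertwining `Λ Q = Q* Λ`: for all `i, k`,
`Σ_j Λ_{i,j} q_{j,k} = Σ_j q*_{i,j} Λ_{j,k}` (both sums having finitely many
nonzero terms). -/
theorem link_intertwines_generators
    (a b : ℕ → ℝ) (ha : ∀ i, 1 ≤ i → 0 < a i) (hb : ∀ i, 0 < b i)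
    (hmu : Summable (bdMu a b)) :
    ∀ i k : ℕ,
      ∑' j : ℕ, bdLink a b i j * bdQEntry a b j k =
        ∑' j : ℕ, bdQEntry (bdAStar a b) (bdBStar a b) i j * bdLink a b j k := by
  have hπ : ∀ n, 0 < bdPi a b n := bdPi_pos ha hb hmu
  have hH : ∀ n, 0 < bdH a b n := bdH_pos ha hb hmu
  have hdb : ∀ j, bdPi a b j * b j = bdPi a b (j + 1) * a (j + 1) :=
    fun j => bd_db ha hb hmu j
  have hHs : ∀ n, bdH a b (n + 1) = bdH a b n + bdPi a b (n + 1) := bdH_succ a b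
  intro i k
  rw [tsum_three _ (k - 1) (fun j hj => by
    have hq : bdQEntry a b j k ≠ 0 := fun h => hj (by simp [h])
    have := bdQEntry_supp a b hq; omega)]
  rw [tsum_three _ (i - 1) (fun j hj => by
    have hq : bdQEntry (bdAStar a b) (bdBStar a b) i j ≠ 0 := fun h => hj (by simp [h])
    have := bdQEntry_supp _ _ hq; omega)]
  rcases lt_trichotomy i k with hik | hik | hik
  · rcases Nat.eq_or_lt_of_le hik with hD | hE
    · -- k = i + 1
      have key : bdPi a b i / bdH a b i * b i =
          bdBStar a b i * (bdPi a b (i + 1) / bdH a b (i + 1)) := by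
        simp only [bdBStar]
        have h1 : bdH a b i ≠ 0 := (hH i).ne'
        have h2 : bdH a b (i + 1) ≠ 0 := (hH (i + 1)).ne'
        field_simp
        linear_combination hdb i
      rcases Nat.eq_zero_or_pos i with h0 | h1
      · subst h0
        rw [show k - 1 = 0 by omega, show k = 1 by omega, show (0:ℕ) - 1 = 0 from rfl,
          bdLink_le a b (le_refl 0), bdQEntry_birth a b rfl,
          bdLink_zero a b (show (0:ℕ) < 1 by omega),
          bdLink_zero a b (show (0:ℕ) < 2 by omega),
          bdQEntry_birth (bdAStar a b) (bdBStar a b) (rfl : (1:ℕ) = 0 + 1),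
          bdLink_le a b (le_refl 1),
          bdQEntry_zero (bdAStar a b) (bdBStar a b)
            (show (2:ℕ) ≠ 0 + 1 by omega) (show (0:ℕ) ≠ 2 + 1 by omega)
            (show (0:ℕ) ≠ 2 by omega)]
        simpa using key
      · rw [show k - 1 = i by omega, bdLink_le a b (le_refl i),
          bdQEntry_birth a b (show k = i + 1 by omega),
          bdLink_zero a b (show i < i + 1 by omega),
          bdLink_zero a b (show i < i + 2 by omega),
          show i - 1 + 1 = i by omega, show i - 1 + 2 = i + 1 by omega,
          bdLink_zero a b (show i - 1 < k by omega),
          bdLink_zero a b (show i < k by omega),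
          bdQEntry_birth (bdAStar a b) (bdBStar a b) (rfl : i + 1 = i + 1),
          bdLink_le a b (show k ≤ i + 1 by omega), show k = i + 1 by omega]
        simpa using key
    · -- k ≥ i + 2
      have hT3 : bdQEntry (bdAStar a b) (bdBStar a b) i (i - 1 + 2) *
          bdLink a b (i - 1 + 2) k = 0 := by
        rcases Nat.eq_zero_or_pos i with h0 | h1
        · subst h0
          rw [bdQEntry_zero (bdAStar a b) (bdBStar a b) (by omega) (by omega) (by omega),
            zero_mul]
        · rw [bdLink_zero a b (by omega), mul_zero]
      rw [bdLink_zero a b (show i < k - 1 by omega),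
        bdLink_zero a b (show i < k - 1 + 1 by omega),
        bdLink_zero a b (show i < k - 1 + 2 by omega),
        bdLink_zero a b (show i - 1 < k by omega),
        bdLink_zero a b (show i - 1 + 1 < k by omega), hT3]
      ring
  · -- k = i
    subst hik
    rcases Nat.eq_zero_or_pos i with h0 | h1
    · subst h0
      rw [show (0 : ℕ) - 1 = 0 from rfl, bdLink_le a b (le_refl 0), bdQEntry_diag0,
        bdLink_zero a b (show (0:ℕ) < 1 by omega),
        bdLink_zero a b (show (0:ℕ) < 2 by omega),
        bdQEntry_diag0 (bdAStar a b) (bdBStar a b),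
        bdQEntry_birth (bdAStar a b) (bdBStar a b) (rfl : (1:ℕ) = 0 + 1),
        bdLink_le a b (show (0:ℕ) ≤ 1 by omega),
        bdQEntry_zero (bdAStar a b) (bdBStar a b)
          (show (2:ℕ) ≠ 0 + 1 by omega) (show (0:ℕ) ≠ 2 + 1 by omega)
          (show (0:ℕ) ≠ 2 by omega)]
      simp only [bdBStar, zero_mul, mul_zero]
      have hH0 : bdH a b 0 = bdPi a b 0 := by unfold bdH; simp
      have h1 : bdH a b 0 ≠ 0 := (hH 0).ne'
      have h2 : bdH a b 1 ≠ 0 := (hH 1).ne'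
      have e1 := hdb 0
      have e2 := hHs 0
      field_simp
      linear_combination (bdPi a b 0 * a 1) * e2 -
        (bdPi a b 0) * e1 -
        (bdPi a b 0 * b 0) * hH0
    · rw [show i - 1 + 1 = i by omega, show i - 1 + 2 = i + 1 by omega,
        bdLink_le a b (show i - 1 ≤ i by omega),
        bdQEntry_birth a b (show i = (i - 1) + 1 by omega),
        bdLink_le a b (le_refl i), bdQEntry_diag a b h1,
        bdLink_zero a b (show i < i + 1 by omega),
        bdLink_zero a b (show i - 1 < i by omega),
        bdQEntry_diag (bdAStar a b) (bdBStar a b) h1,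
        bdQEntry_birth (bdAStar a b) (bdBStar a b) (rfl : i + 1 = i + 1),
        bdLink_le a b (show i ≤ i + 1 by omega)]
      simp only [bdAStar, bdBStar, zero_mul, mul_zero]
      have h2 : bdH a b i ≠ 0 := (hH i).ne'
      have h3 : bdH a b (i + 1) ≠ 0 := (hH (i + 1)).ne'
      have h4 : bdH a b (i - 1) ≠ 0 := (hH (i - 1)).ne'
      have e1 : bdPi a b (i - 1) * b (i - 1) = bdPi a b i * a i := by
        have := hdb (i - 1); rw [show i - 1 + 1 = i by omega] at this; linarith
      have e2 := hdb i
      have e3 : bdH a b i = bdH a b (i - 1) + bdPi a b i := by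
        have := hHs (i - 1); rw [show i - 1 + 1 = i by omega] at this; linarith
      have e4 := hHs i
      field_simp
      linear_combination (bdH a b i) * e1 -
        (bdPi a b i * b i) * e3 +
        (bdPi a b i * a (i + 1)) * e4 -
        (bdPi a b i) * e2
  · -- k < i
    have hR1 : i - 1 + 1 = i := by omega
    have hR2 : i - 1 + 2 = i + 1 := by omega
    rw [hR1, hR2,
      bdQEntry_death (bdAStar a b) (bdBStar a b) (show i = (i - 1) + 1 by omega),
      bdLink_le a b (show k ≤ i - 1 by omega),
      bdQEntry_diag (bdAStar a b) (bdBStar a b) (show 1 ≤ i by omega),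
      bdLink_le a b (show k ≤ i by omega),
      bdQEntry_birth (bdAStar a b) (bdBStar a b) (rfl : i + 1 = i + 1),
      bdLink_le a b (show k ≤ i + 1 by omega)]
    have h2 : bdH a b i ≠ 0 := (hH i).ne'
    have h3 : bdH a b (i + 1) ≠ 0 := (hH (i + 1)).ne'
    have h4 : bdH a b (i - 1) ≠ 0 := (hH (i - 1)).ne'
    have e2 := hdb i
    have e3 : bdH a b i = bdH a b (i - 1) + bdPi a b i := by
      have := hHs (i - 1); rw [show i - 1 + 1 = i by omega] at this; linarith
    have e4 := hHs i
    rcases Nat.eq_zero_or_pos k with hk0 | hk1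
    · subst hk0
      rw [show (0 : ℕ) - 1 = 0 from rfl, bdLink_le a b (show (0:ℕ) ≤ i by omega),
        bdQEntry_diag0, bdLink_le a b (show (1:ℕ) ≤ i by omega),
        bdQEntry_death a b (rfl : (1:ℕ) = 0 + 1),
        bdQEntry_zero a b (show (0:ℕ) ≠ 2 + 1 by omega)
          (show (2:ℕ) ≠ 0 + 1 by omega) (show (2:ℕ) ≠ 0 by omega), mul_zero]
      simp only [bdAStar, bdBStar]
      have e1 := hdb 0
      field_simp
      linear_combination -(bdH a b i) * e1 +
        (bdPi a b 0 * a (i + 1)) * e4 -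
        (bdPi a b 0 * b i) * e3 -
        (bdPi a b 0) * e2
    · rw [show k - 1 + 1 = k by omega, show k - 1 + 2 = k + 1 by omega,
        bdLink_le a b (show k - 1 ≤ i by omega),
        bdQEntry_birth a b (show k = (k - 1) + 1 by omega),
        bdLink_le a b (show k ≤ i by omega), bdQEntry_diag a b hk1,
        bdLink_le a b (show k + 1 ≤ i by omega),
        bdQEntry_death a b (rfl : k + 1 = k + 1)]
      simp only [bdAStar, bdBStar]
      have e0 : bdPi a b (k - 1) * b (k - 1) = bdPi a b k * a k := by
        have := hdb (k - 1); rw [show k - 1 + 1 = k by omega] at this; linarith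
      have e1 := hdb k
      field_simp
      linear_combination
        (bdH a b i) * e0 -
        (bdH a b i) * e1 +
        (bdPi a b k * a (i + 1)) * e4 -
        (bdPi a b k * b i) * e3 -
        (bdPi a b k) * e2
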